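/- Let K be a field and q a positive integer. Let a, b, c ∈ K be pairwise distinct and pairwise non-conjugate (i.e., b ≠ a^q, a ≠ b^q, c ≠ a^q, a ≠ c^q, c ≠ b^q, b ≠ c^q). Then the three vectors v(y) = (1, y^q + y, (y^q + y)², y^{q+1}, y^{2(q+1)}) ∈ K⁵, for y = a, b, c, are linearly independent over K. -/
import Mathlib

/-- Helper: if the point `(Ta, Na)` differs from both `(Tb, Nb)` and `(Tc, Nc)`,
then the five "moment" equations force `x = 0`. -/
private lemma aux_first_coeff {K : Type*} [Field K]
    (Ta Na Tb Nb Tc Nc x y z : K)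
    (hb : Ta ≠ Tb ∨ Na ≠ Nb) (hc : Ta ≠ Tc ∨ Na ≠ Nc)
    (e0 : x + y + z = 0)
    (e1 : x * Ta + y * Tb + z * Tc = 0)
    (e2 : x * Ta ^ 2 + y * Tb ^ 2 + z * Tc ^ 2 = 0)
    (e3 : x * Na + y * Nb + z * Nc = 0)
    (e4 : x * Na ^ 2 + y * Nb ^ 2 + z * Nc ^ 2 = 0) : x = 0 := by
  by_cases hT1 : Ta = Tb
  · have hN1 : Na ≠ Nb := hb.resolve_left (by simp [hT1])
    by_cases hN2 : Na = Nc
    · have hT2 : Ta ≠ Tc := hc.resolve_right (by simp [hN2])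
      subst hT1; subst hN2
      have hx : x * ((Ta - Tc) * (Na - Nb)) = 0 := by
        linear_combination (Na - Nb) * e1 + (Ta - Tc) * e3
          - ((Na - Nb) * Ta + (Ta - Tc) * Nb) * e0
      rcases mul_eq_zero.1 hx with h | h
      · exact h
      · exact (mul_ne_zero (sub_ne_zero.mpr hT2) (sub_ne_zero.mpr hN1) h).elim
    · -- Na ≠ Nb and Na ≠ Nc : Vandermonde in N
      have hx : x * ((Na - Nb) * (Na - Nc)) = 0 := by
        linear_combination e4 - (Nb + Nc) * e3 + (Nb * Nc) * e0
      rcases mul_eq_zero.1 hx with h | h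
      · exact h
      · exact (mul_ne_zero (sub_ne_zero.mpr hN1) (sub_ne_zero.mpr hN2) h).elim
  · by_cases hT2 : Ta = Tc
    · have hN2 : Na ≠ Nc := hc.resolve_left (by simp [hT2])
      by_cases hN1 : Na = Nb
      · subst hT2; subst hN1
        have hx : x * ((Nc - Na) * (Ta - Tb)) = 0 := by
          linear_combination (Nc - Na) * e1 + (Tb - Ta) * e3
            - ((Nc - Na) * Tb + (Tb - Ta) * Na) * e0
        rcases mul_eq_zero.1 hx with h | h
        · exact h
        · exact (mul_ne_zero (sub_ne_zero.mpr (Ne.symm hN2)) (sub_ne_zero.mpr hT1) h).elim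
      · have hx : x * ((Na - Nb) * (Na - Nc)) = 0 := by
          linear_combination e4 - (Nb + Nc) * e3 + (Nb * Nc) * e0
        rcases mul_eq_zero.1 hx with h | h
        · exact h
        · exact (mul_ne_zero (sub_ne_zero.mpr hN1) (sub_ne_zero.mpr hN2) h).elim
    · -- Ta ≠ Tb and Ta ≠ Tc : Vandermonde in T
      have hx : x * ((Ta - Tb) * (Ta - Tc)) = 0 := by
        linear_combination e2 - (Tb + Tc) * e1 + (Tb * Tc) * e0
      rcases mul_eq_zero.1 hx with h | h
      · exact h
      · exact (mul_ne_zero (sub_ne_zero.mpr hT1) (sub_ne_zero.mpr hT2) h).elim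

/-- Distinct, non-conjugate elements have distinct (trace, norm) pairs. -/
private lemma aux_pair_ne {K : Type*} [Field K] (q : ℕ) (a b : K)
    (hab : a ≠ b) (hba : b ≠ a ^ q) :
    a ^ q + a ≠ b ^ q + b ∨ a ^ (q + 1) ≠ b ^ (q + 1) := by
  by_contra h
  push_neg at h
  obtain ⟨hT, hN⟩ := h
  have h0 : (b - a) * (b - a ^ q) = 0 := by
    linear_combination (-b) * hT + hN
  rcases mul_eq_zero.1 h0 with h | h
  · exact hab (sub_eq_zero.mp h).symm
  · exact hba (sub_eq_zero.mp h)

/-- The vector `(1, y^q + y, (y^q + y)², y^{q+1}, y^{2(q+1)}) ∈ K⁵`. -/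
def traceNormVec5 (K : Type*) [Field K] (q : ℕ) (y : K) : Fin 5 → K :=
  ![1, y ^ q + y, (y ^ q + y) ^ 2, y ^ (q + 1), y ^ (2 * (q + 1))]

/-- Let `K` be a field and `q` a positive integer.  If `a, b, c ∈ K` are pairwise
distinct and pairwise non-conjugate, then the three vectors
`(1, y^q + y, (y^q + y)², y^{q+1}, y^{2(q+1)})`, for `y = a, b, c`, are linearly
independent over `K`. -/
theorem statement7 (K : Type*) [Field K] (q : ℕ) (hq : 0 < q) (a b c : K)
    (hab : a ≠ b) (hac : a ≠ c) (hbc : b ≠ c)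
    (hba : b ≠ a ^ q) (hab' : a ≠ b ^ q)
    (hca : c ≠ a ^ q) (hac' : a ≠ c ^ q)
    (hcb : c ≠ b ^ q) (hbc' : b ≠ c ^ q) :
    LinearIndependent K
      ![traceNormVec5 K q a, traceNormVec5 K q b, traceNormVec5 K q c] := by
  rw [Fintype.linearIndependent_iff]
  intro g hg
  have h0 := congrFun hg 0
  have h1 := congrFun hg 1
  have h2 := congrFun hg 2
  have h3 := congrFun hg 3
  have h4 := congrFun hg 4
  simp [Fin.sum_univ_three, traceNormVec5] at h0 h1 h2 h3 h4
  set x := g 0 with hx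
  set y := g 1 with hy
  set z := g 2 with hz
  have pab := aux_pair_ne q a b hab hba
  have pac := aux_pair_ne q a c hac hca
  have pba := aux_pair_ne q b a hab.symm hab'
  have pbc := aux_pair_ne q b c hbc hcb
  have pca := aux_pair_ne q c a hac.symm hac'
  have pcb := aux_pair_ne q c b hbc.symm hbc'
  have e0 : x + y + z = 0 := by linear_combination h0
  have e1 : x * (a ^ q + a) + y * (b ^ q + b) + z * (c ^ q + c) = 0 := by
    linear_combination h1
  have e2 : x * (a ^ q + a) ^ 2 + y * (b ^ q + b) ^ 2 + z * (c ^ q + c) ^ 2 = 0 := by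
    linear_combination h2
  have e3 : x * a ^ (q + 1) + y * b ^ (q + 1) + z * c ^ (q + 1) = 0 := by
    linear_combination h3
  have e4 : x * (a ^ (q + 1)) ^ 2 + y * (b ^ (q + 1)) ^ 2 + z * (c ^ (q + 1)) ^ 2 = 0 := by
    linear_combination h4
  have hx0 : x = 0 := aux_first_coeff _ _ _ _ _ _ x y z pab pac e0 e1 e2 e3 e4
  have hy0 : y = 0 := by
    apply aux_first_coeff (b ^ q + b) (b ^ (q + 1)) (a ^ q + a) (a ^ (q + 1))
      (c ^ q + c) (c ^ (q + 1)) y x z pba pbc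
    · linear_combination e0
    · linear_combination e1
    · linear_combination e2
    · linear_combination e3
    · linear_combination e4
  have hz0 : z = 0 := by
    apply aux_first_coeff (c ^ q + c) (c ^ (q + 1)) (a ^ q + a) (a ^ (q + 1))
      (b ^ q + b) (b ^ (q + 1)) z x y pca pcb
    · linear_combination e0
    · linear_combination e1
    · linear_combination e2
    · linear_combination e3
    · linear_combination e4
  intro i
  fin_cases i
  · exact hx0
  · exact hy0
  · exact hz0
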